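/- Let 0 < u < 1 and let w be a real number with w ≤ -1 satisfying w·e^w = -e^{-u-1}. Then -1 - √(2u) - (3/4)·u < w < -1 - √(2u) - (2/3)·u. -/

import Mathlib

/-- Degree-4 Taylor lower bound for `exp` on nonnegative reals. -/
lemma exp_taylor4_le {x : ℝ} (hx : 0 ≤ x) :
    1 + x + x ^ 2 / 2 + x ^ 3 / 6 + x ^ 4 / 24 ≤ Real.exp x := by
  have h := Real.sum_le_exp_of_nonneg hx 5
  rw [Finset.sum_range_succ, Finset.sum_range_succ, Finset.sum_range_succ,
    Finset.sum_range_succ, Finset.sum_range_one] at h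
  norm_num [Nat.factorial] at h
  linarith

/-- Degree-5 alternating upper bound: `(1 - x + x²/2 - x³/6 + x⁴/24 - x⁵/120) * exp x ≤ 1`. -/
lemma exp_upper_aux {x : ℝ} (hx : 0 ≤ x) :
    (1 - x + x ^ 2 / 2 - x ^ 3 / 6 + x ^ 4 / 24 - x ^ 5 / 120) * Real.exp x ≤ 1 := by
  set f : ℝ → ℝ := fun t => (1 - t + t ^ 2 / 2 - t ^ 3 / 6 + t ^ 4 / 24 - t ^ 5 / 120) * Real.exp t
    with hf_def
  have key : ∀ y : ℝ, HasDerivAt f (-(y ^ 5 / 120) * Real.exp y) y := by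
    intro y
    have h1 : HasDerivAt (fun t : ℝ => 1 - t + t ^ 2 / 2 - t ^ 3 / 6 + t ^ 4 / 24 - t ^ 5 / 120)
        (-1 + y - y ^ 2 / 2 + y ^ 3 / 6 - y ^ 4 / 24) y := by
      have := (((((hasDerivAt_const y (1 : ℝ)).sub (hasDerivAt_id y)).add
        ((hasDerivAt_pow 2 y).div_const 2)).sub ((hasDerivAt_pow 3 y).div_const 6)).add
        ((hasDerivAt_pow 4 y).div_const 24)).sub ((hasDerivAt_pow 5 y).div_const 120)
      refine this.congr_deriv ?_
      push_cast
      ring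
    have := h1.mul (Real.hasDerivAt_exp y)
    refine this.congr_deriv ?_
    ring
  have anti : AntitoneOn f (Set.Ici (0 : ℝ)) := by
    apply antitoneOn_of_deriv_nonpos (convex_Ici 0)
    · exact fun y _ => ((key y).continuousAt).continuousWithinAt
    · exact fun y _ => ((key y).differentiableAt).differentiableWithinAt
    · intro y hy
      rw [interior_Ici] at hy
      rw [(key y).deriv]
      have hy0 : (0 : ℝ) < y := hy
      nlinarith [Real.exp_pos y, pow_pos hy0 5]
  have h0 : f 0 = 1 := by simp [hf_def]
  have := anti Set.self_mem_Ici (Set.mem_Ici.mpr hx) hx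
  rw [h0] at this
  exact this

/-- Positivity of the certificate polynomial for the lower bound. -/
lemma RA_pos {s : ℝ} (hs : 0 < s) (hs2 : s ^ 2 < 2) :
    0 < (1408 + 1408 * (2 - s ^ 2) - 32 * (2 - s ^ 2) ^ 2)
      + s * (-572 - 356 * (2 - s ^ 2) + (2 - s ^ 2) ^ 2) := by
  have ht0 : (0 : ℝ) ≤ 2 - s ^ 2 := by linarith
  have hA : (0 : ℝ) < 1408 + 1408 * (2 - s ^ 2) - 32 * (2 - s ^ 2) ^ 2 := by
    nlinarith [mul_nonneg ht0 (sq_nonneg s)]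
  have hC : s ^ 2 * (-572 - 356 * (2 - s ^ 2) + (2 - s ^ 2) ^ 2) ^ 2
      < (1408 + 1408 * (2 - s ^ 2) - 32 * (2 - s ^ 2) ^ 2) ^ 2 := by
    nlinarith [ht0, pow_nonneg ht0 2, pow_nonneg ht0 3, pow_nonneg ht0 4, pow_nonneg ht0 5]
  rcases le_or_gt 0 (-572 - 356 * (2 - s ^ 2) + (2 - s ^ 2) ^ 2) with hB | hB
  · nlinarith [mul_nonneg hs.le hB]
  · nlinarith [hC, hA, mul_pos hs (neg_pos.2 hB)]

/-- Positivity of the certificate polynomial for the upper bound. -/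
lemma RB_pos {s : ℝ} (hs : 0 < s) (hs2 : s ^ 2 < 2) :
    0 < (166384 - 59180 * (2 - s ^ 2) + 8052 * (2 - s ^ 2) ^ 2 - 311 * (2 - s ^ 2) ^ 3
        + (2 - s ^ 2) ^ 4)
      + s * (-98136 + 21780 * (2 - s ^ 2) - 1962 * (2 - s ^ 2) ^ 2 + 27 * (2 - s ^ 2) ^ 3) := by
  have ht0 : (0 : ℝ) ≤ 2 - s ^ 2 := by linarith
  have hA : (0 : ℝ) < 166384 - 59180 * (2 - s ^ 2) + 8052 * (2 - s ^ 2) ^ 2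
      - 311 * (2 - s ^ 2) ^ 3 + (2 - s ^ 2) ^ 4 := by
    nlinarith [mul_nonneg (pow_nonneg ht0 2) (sq_nonneg s), sq_nonneg ((2 - s ^ 2) - 4),
      pow_nonneg ht0 4]
  have hC : s ^ 2 * (-98136 + 21780 * (2 - s ^ 2) - 1962 * (2 - s ^ 2) ^ 2
        + 27 * (2 - s ^ 2) ^ 3) ^ 2
      < (166384 - 59180 * (2 - s ^ 2) + 8052 * (2 - s ^ 2) ^ 2 - 311 * (2 - s ^ 2) ^ 3
        + (2 - s ^ 2) ^ 4) ^ 2 := by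
    nlinarith [mul_nonneg (pow_nonneg ht0 2) (sq_nonneg s), sq_nonneg ((2 - s ^ 2) - 5),
      pow_nonneg ht0 4, pow_nonneg ht0 5, pow_nonneg ht0 6, pow_nonneg ht0 7, pow_nonneg ht0 8]
  rcases le_or_gt 0 (-98136 + 21780 * (2 - s ^ 2) - 1962 * (2 - s ^ 2) ^ 2
      + 27 * (2 - s ^ 2) ^ 3) with hB | hB
  · nlinarith [mul_nonneg hs.le hB]
  · nlinarith [hC, hA, mul_pos hs (neg_pos.2 hB)]

/-- Polynomial inequality A. -/
lemma polyA {s : ℝ} (hs : 0 < s) (hs2 : s ^ 2 < 2) :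
    1 + s + 3 / 8 * s ^ 2 <
      1 + (s - s ^ 2 / 8) + (s - s ^ 2 / 8) ^ 2 / 2 + (s - s ^ 2 / 8) ^ 3 / 6
        + (s - s ^ 2 / 8) ^ 4 / 24 := by
  nlinarith [mul_pos (pow_pos hs 3) (RA_pos hs hs2)]

/-- Polynomial inequality B. -/
lemma polyB {s : ℝ} (hs : 0 < s) (hs2 : s ^ 2 < 2) :
    1 < (1 + s + s ^ 2 / 3) *
      (1 - (s - s ^ 2 / 6) + (s - s ^ 2 / 6) ^ 2 / 2 - (s - s ^ 2 / 6) ^ 3 / 6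
        + (s - s ^ 2 / 6) ^ 4 / 24 - (s - s ^ 2 / 6) ^ 5 / 120) := by
  nlinarith [mul_pos (pow_pos hs 4) (RB_pos hs hs2)]

theorem lambert_Wm1_bounds_unit_interval (u w : ℝ) (hu0 : 0 < u) (hu1 : u < 1)
    (hw : w ≤ -1) (hWw : w * Real.exp w = -Real.exp (-u - 1)) :
    -1 - Real.sqrt (2 * u) - 3 / 4 * u < w ∧ w < -1 - Real.sqrt (2 * u) - 2 / 3 * u := by
  set s := Real.sqrt (2 * u) with hs_def
  have hs2 : s ^ 2 = 2 * u := Real.sq_sqrt (by linarith)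
  have hs0 : 0 < s := Real.sqrt_pos.mpr (by linarith)
  have hslt : s ^ 2 < 2 := by rw [hs2]; linarith
  have hu : u = s ^ 2 / 2 := by linarith
  -- strict antitonicity of x * exp x on Iic (-1)
  have anti : StrictAntiOn (fun x : ℝ => x * Real.exp x) (Set.Iic (-1 : ℝ)) := by
    apply strictAntiOn_of_deriv_neg (convex_Iic _)
    · exact (continuous_id.mul Real.continuous_exp).continuousOn
    · intro x hx
      rw [interior_Iic] at hx
      have hd : HasDerivAt (fun x : ℝ => x * Real.exp x) (1 * Real.exp x + x * Real.exp x) x :=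
        (hasDerivAt_id x).mul (Real.hasDerivAt_exp x)
      rw [hd.deriv]
      have hx1 : x < -1 := hx
      nlinarith [Real.exp_pos x]
  have cmp : ∀ a b : ℝ, a ∈ Set.Iic (-1 : ℝ) → b ∈ Set.Iic (-1 : ℝ) →
      b * Real.exp b < a * Real.exp a → a < b := by
    intro a b ha hb hab
    by_contra h
    push_neg at h
    rcases eq_or_lt_of_le h with rfl | h'
    · exact lt_irrefl _ hab
    · exact absurd (anti hb ha h') (not_lt.mpr hab.le)
  constructor
  · -- lower bound
    have ha : -1 - s - 3 / 4 * u ∈ Set.Iic (-1 : ℝ) := by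
      simp only [Set.mem_Iic]; nlinarith
    have hkey : 1 + s + 3 / 4 * u < Real.exp (s - u / 4) := by
      have hx_eq : s - u / 4 = s - s ^ 2 / 8 := by rw [hu]; ring
      have h38 : 3 / 4 * u = 3 / 8 * s ^ 2 := by rw [hu]; ring
      rw [hx_eq, h38]
      have h1 := exp_taylor4_le (x := s - s ^ 2 / 8) (by nlinarith)
      have h2 := polyA hs0 hslt
      linarith
    have hfa : -Real.exp (-u - 1) < (-1 - s - 3 / 4 * u) * Real.exp (-1 - s - 3 / 4 * u) := by
      have he : Real.exp (-u - 1)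
          = Real.exp (s - u / 4) * Real.exp (-1 - s - 3 / 4 * u) := by
        rw [← Real.exp_add]; congr 1; ring
      have hea : 0 < Real.exp (-1 - s - 3 / 4 * u) := Real.exp_pos _
      have h3 : (1 + s + 3 / 4 * u) * Real.exp (-1 - s - 3 / 4 * u)
          < Real.exp (s - u / 4) * Real.exp (-1 - s - 3 / 4 * u) :=
        mul_lt_mul_of_pos_right hkey hea
      rw [← he] at h3
      nlinarith [h3]
    exact cmp _ w ha (Set.mem_Iic.mpr hw) (by rw [hWw]; exact hfa)
  · -- upper bound
    have hb : -1 - s - 2 / 3 * u ∈ Set.Iic (-1 : ℝ) := by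
      simp only [Set.mem_Iic]; nlinarith
    have hx0 : (0 : ℝ) ≤ s - u / 3 := by nlinarith
    have hP := exp_upper_aux hx0
    have hx_eq : s - u / 3 = s - s ^ 2 / 6 := by rw [hu]; ring
    have hs23 : (1 : ℝ) + s + s ^ 2 / 3 = 1 + s + 2 / 3 * u := by rw [hu]; ring
    have hpoly := polyB hs0 hslt
    rw [← hx_eq, hs23] at hpoly
    set P := 1 - (s - u / 3) + (s - u / 3) ^ 2 / 2 - (s - u / 3) ^ 3 / 6
        + (s - u / 3) ^ 4 / 24 - (s - u / 3) ^ 5 / 120 with hP_def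
    have hPpos : 0 < P := by
      by_contra h
      push_neg at h
      have h1 : (1 + s + 2 / 3 * u) * P ≤ 0 :=
        mul_nonpos_of_nonneg_of_nonpos (by nlinarith) h
      linarith
    have hkey : Real.exp (s - u / 3) < 1 + s + 2 / 3 * u := by
      have h1 : Real.exp (s - u / 3) * P ≤ 1 := by rw [mul_comm]; exact hP
      have h2 : Real.exp (s - u / 3) * P < (1 + s + 2 / 3 * u) * P := lt_of_le_of_lt h1 hpoly
      exact lt_of_mul_lt_mul_right h2 hPpos.le
    have hfb : (-1 - s - 2 / 3 * u) * Real.exp (-1 - s - 2 / 3 * u) < -Real.exp (-u - 1) := by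
      have he : Real.exp (-u - 1)
          = Real.exp (s - u / 3) * Real.exp (-1 - s - 2 / 3 * u) := by
        rw [← Real.exp_add]; congr 1; ring
      have heb : 0 < Real.exp (-1 - s - 2 / 3 * u) := Real.exp_pos _
      have h3 : Real.exp (s - u / 3) * Real.exp (-1 - s - 2 / 3 * u)
          < (1 + s + 2 / 3 * u) * Real.exp (-1 - s - 2 / 3 * u) :=
        mul_lt_mul_of_pos_right hkey heb
      rw [← he] at h3
      nlinarith [h3]
    exact cmp w _ (Set.mem_Iic.mpr hw) hb (by rw [hWw]; exact hfb)
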